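/- Let C be a cyclic code over R = F_p[u,v]/⟨u^k, v², uv−vu⟩ of length p^l with torsion polynomial g_{2k}(x) = (x−1)^{t_{2k}} where 0 < t_{2k}. If t_{2k} ≤ p^{l−1}, then the minimum Hamming distance of C is 2. -/

import Mathlib

set_option synthInstance.maxHeartbeats 1000000
set_option maxHeartbeats 1000000

open Polynomial

/-- The ring `F_p[u,v]/⟨u^k, v²⟩` (the variables commute, so `uv - vu = 0` is automatic). -/
abbrev Rbase (p k : ℕ) : Type :=
  MvPolynomial (Fin 2) (ZMod p) ⧸
    Ideal.span {(MvPolynomial.X 0 : MvPolynomial (Fin 2) (ZMod p)) ^ k, MvPolynomial.X 1 ^ 2}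

/-- The image of `u`. -/
noncomputable def uu (p k : ℕ) : Rbase p k := Ideal.Quotient.mk _ (MvPolynomial.X 0)

/-- The image of `v`. -/
noncomputable def vv (p k : ℕ) : Rbase p k := Ideal.Quotient.mk _ (MvPolynomial.X 1)

/-- `R_n = (F_p[u,v]/⟨u^k,v²⟩)[x]/⟨xⁿ−1⟩`, the ambient ring of cyclic codes of length `n`. -/
abbrev Rn (p k n : ℕ) : Type :=
  Polynomial (Rbase p k) ⧸
    Ideal.span {(Polynomial.X : Polynomial (Rbase p k)) ^ n - 1}

instance (p k n : ℕ) : (Ideal.span {(Polynomial.X : Polynomial (Rbase p k)) ^ n - 1}).IsTwoSided :=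
  ⟨fun b ha ↦ mul_comm b _ ▸ Ideal.mul_mem_left _ b ha⟩

noncomputable def uR (p k n : ℕ) : Rn p k n := Ideal.Quotient.mk _ (Polynomial.C (uu p k))
noncomputable def vR (p k n : ℕ) : Rn p k n := Ideal.Quotient.mk _ (Polynomial.C (vv p k))
noncomputable def xR (p k n : ℕ) : Rn p k n := Ideal.Quotient.mk _ Polynomial.X

/-- The canonical map `F_p[x] → R_n` (coefficientwise inclusion followed by the quotient map). -/
noncomputable def theta (p k n : ℕ) : Polynomial (ZMod p) →+* Rn p k n :=
  (Ideal.Quotient.mk _).comp (Polynomial.mapRingHom (algebraMap (ZMod p) (Rbase p k)))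

/-- The set of `f ∈ F_p[x]` representing elements of
`C_i = Tor Res … Res (C) = {f : u^{i-1}·f ∈ C mod ⟨u^i, v⟩}`. -/
def resTorSet (p k n : ℕ) (C : Ideal (Rn p k n)) (i : ℕ) : Set (Polynomial (ZMod p)) :=
  {f | uR p k n ^ (i - 1) * theta p k n f ∈
        C ⊔ Ideal.span {uR p k n ^ i, vR p k n}}

/-- The set of `f ∈ F_p[x]` representing elements of
`C_{k+i} = Tor Res … Res Tor (C) = {f : u^{i-1}·v·f ∈ C mod ⟨u^i v⟩}`. -/
def torTorSet (p k n : ℕ) (C : Ideal (Rn p k n)) (i : ℕ) : Set (Polynomial (ZMod p)) :=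
  {f | uR p k n ^ (i - 1) * vR p k n * theta p k n f ∈
        C ⊔ Ideal.span {uR p k n ^ i * vR p k n}}

/-- `g` is the (monic, minimal-degree) generator of the ideal of `F_p[x]/⟨xⁿ−1⟩` whose set
of polynomial representatives is `S`. -/
def IsMinGen (p n : ℕ) (S : Set (Polynomial (ZMod p))) (g : Polynomial (ZMod p)) : Prop :=
  g.Monic ∧
  S = {f | ∃ a b : Polynomial (ZMod p), f = g * a + (Polynomial.X ^ n - 1) * b} ∧
  ∀ f ∈ S, f ≠ 0 → g.degree ≤ f.degree

/-- The canonical generator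
`A_i = u^{i-1}g_i + u^i g_{ii} + ⋯ + u^{k-1}g_{i(k-1)} + v(g_{ik} + ⋯ + u^{k-1}g_{i(2k-1)})`
as a polynomial over `F_p[u,v]/⟨u^k,v²⟩`, for `1 ≤ i ≤ k`. -/
noncomputable def Apoly (p k : ℕ) (g : ℕ → Polynomial (ZMod p))
    (gg : ℕ → ℕ → Polynomial (ZMod p)) (i : ℕ) : Polynomial (Rbase p k) :=
  Polynomial.C (uu p k ^ (i - 1)) * (g i).map (algebraMap (ZMod p) (Rbase p k))
    + ∑ j ∈ Finset.Icc i (k - 1),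
        Polynomial.C (uu p k ^ j) * (gg i j).map (algebraMap (ZMod p) (Rbase p k))
    + Polynomial.C (vv p k) *
        ∑ j ∈ Finset.Icc k (2 * k - 1),
          Polynomial.C (uu p k ^ (j - k)) * (gg i j).map (algebraMap (ZMod p) (Rbase p k))

/-- The canonical generator
`A_{k+i} = v(u^{i-1}g_{k+i} + u^i g_{(k+i)(k+i)} + ⋯ + u^{k-1}g_{(k+i)(2k-1)})`
as a polynomial over `F_p[u,v]/⟨u^k,v²⟩`, for `1 ≤ i ≤ k`. -/
noncomputable def AVpoly (p k : ℕ) (g : ℕ → Polynomial (ZMod p))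
    (gg : ℕ → ℕ → Polynomial (ZMod p)) (i : ℕ) : Polynomial (Rbase p k) :=
  Polynomial.C (vv p k) *
    (Polynomial.C (uu p k ^ (i - 1)) * (g (k + i)).map (algebraMap (ZMod p) (Rbase p k))
      + ∑ j ∈ Finset.Icc (k + i) (2 * k - 1),
          Polynomial.C (uu p k ^ (j - k)) * (gg (k + i) j).map (algebraMap (ZMod p) (Rbase p k)))

/-- `A_i` as an element of `R_n`. -/
noncomputable def Aelt (p k n : ℕ) (g : ℕ → Polynomial (ZMod p))
    (gg : ℕ → ℕ → Polynomial (ZMod p)) (i : ℕ) : Rn p k n :=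
  Ideal.Quotient.mk _ (Apoly p k g gg i)

/-- `A_{k+i}` as an element of `R_n`. -/
noncomputable def AVelt (p k n : ℕ) (g : ℕ → Polynomial (ZMod p))
    (gg : ℕ → ℕ → Polynomial (ZMod p)) (i : ℕ) : Rn p k n :=
  Ideal.Quotient.mk _ (AVpoly p k g gg i)

/-- The minimum Hamming weight of a nonzero codeword of `C ⊆ R_n` (weights are computed
on the unique representative of degree `< n`). -/
noncomputable def dHam (p k n : ℕ) (C : Ideal (Rn p k n)) : ℕ :=
  sInf {m | ∃ f : Polynomial (Rbase p k), f ≠ 0 ∧ f.degree < (n : ℕ) ∧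
    Ideal.Quotient.mk (Ideal.span {(Polynomial.X : Polynomial (Rbase p k)) ^ n - 1}) f ∈ C ∧
    m = f.support.card}

/-- The minimum Hamming weight of a nonzero codeword of a cyclic code over `F_p` given by a
set `S` of polynomial representatives (closed under adding multiples of `xⁿ−1`). -/
noncomputable def dHamF (p n : ℕ) (S : Set (Polynomial (ZMod p))) : ℕ :=
  sInf {m | ∃ f : Polynomial (ZMod p), f ≠ 0 ∧ f.degree < (n : ℕ) ∧ f ∈ S ∧
    m = f.support.card}

section Aux
abbrev Bq (p k : ℕ) : Type := Polynomial (ZMod p) ⧸ Ideal.span {(X : Polynomial (ZMod p))^k}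

noncomputable def xiB (p k : ℕ) : Bq p k := Ideal.Quotient.mk _ X

variable (p k : ℕ) [Fact p.Prime]

lemma xiB_pow_k : xiB p k ^ k = 0 := by
  rw [xiB, ← map_pow, Ideal.Quotient.eq_zero_iff_mem]
  exact Ideal.subset_span rfl

lemma uu_pow_k : uu p k ^ k = 0 := by
  rw [uu, ← map_pow, Ideal.Quotient.eq_zero_iff_mem]
  exact Ideal.subset_span (Or.inl rfl)

lemma vv_sq : vv p k * vv p k = 0 := by
  rw [vv, ← map_mul, ← sq, Ideal.Quotient.eq_zero_iff_mem]
  exact Ideal.subset_span (Or.inr rfl)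

/-- the map B → Rbase sending ξ to u -/
noncomputable def fB : Bq p k →ₐ[ZMod p] Rbase p k :=
  Ideal.Quotient.liftₐ _ (aeval (uu p k)) (by
    intro a ha
    rw [Ideal.mem_span_singleton] at ha
    obtain ⟨c, rfl⟩ := ha
    rw [map_mul, map_pow, aeval_X, uu_pow_k, zero_mul])

@[simp] lemma fB_xi : fB p k (xiB p k) = uu p k := by
  show aeval (uu p k) (X : Polynomial (ZMod p)) = uu p k
  simp

/-- ψ : DualNumber B → Rbase -/
noncomputable def psi : DualNumber (Bq p k) →ₐ[ZMod p] Rbase p k :=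
  DualNumber.lift ⟨(fB p k, vv p k), by simpa using vv_sq p k, fun a => Commute.all _ _⟩

noncomputable def phi : Rbase p k →ₐ[ZMod p] DualNumber (Bq p k) :=
  Ideal.Quotient.liftₐ _ (MvPolynomial.aeval ![TrivSqZeroExt.inl (xiB p k), DualNumber.eps]) (by
    intro a ha
    have h : a ∈ RingHom.ker (MvPolynomial.aeval
        ![TrivSqZeroExt.inl (xiB p k), DualNumber.eps] :
        MvPolynomial (Fin 2) (ZMod p) →ₐ[ZMod p] DualNumber (Bq p k)).toRingHom := by
      refine Ideal.span_le.mpr ?_ ha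
      rintro x (rfl | rfl) <;>
        simp only [SetLike.mem_coe, RingHom.mem_ker, AlgHom.toRingHom_eq_coe,
          RingHom.coe_coe, map_pow, MvPolynomial.aeval_X]
      · show (TrivSqZeroExt.inl (xiB p k) : DualNumber (Bq p k)) ^ k = 0
        rw [TrivSqZeroExt.inl_pow, xiB_pow_k, TrivSqZeroExt.inl_zero]
      · show (DualNumber.eps : DualNumber (Bq p k)) ^ 2 = 0
        rw [sq, DualNumber.eps_mul_eps]
    exact h)

@[simp] lemma phi_uu : phi p k (uu p k) = TrivSqZeroExt.inl (xiB p k) := by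
  show MvPolynomial.aeval ![TrivSqZeroExt.inl (xiB p k), DualNumber.eps]
    (MvPolynomial.X 0 : MvPolynomial (Fin 2) (ZMod p)) = _
  simp

@[simp] lemma phi_vv : phi p k (vv p k) = DualNumber.eps := by
  show MvPolynomial.aeval ![TrivSqZeroExt.inl (xiB p k), DualNumber.eps]
    (MvPolynomial.X 1 : MvPolynomial (Fin 2) (ZMod p)) = _
  simp

lemma psi_phi (x : Rbase p k) : psi p k (phi p k x) = x := by
  have : (psi p k).comp (phi p k) = AlgHom.id _ _ := by
    apply Ideal.Quotient.algHom_ext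
    apply MvPolynomial.algHom_ext
    intro i
    fin_cases i <;> simp [AlgHom.comp_apply]
    · show psi p k (phi p k (uu p k)) = uu p k
      rw [phi_uu]; simp [psi]
    · show psi p k (phi p k (vv p k)) = vv p k
      rw [phi_vv]; simp [psi]
  exact DFunLike.congr_fun this x

lemma algebraMap_Bq (s : ZMod p) :
    algebraMap (ZMod p) (Bq p k) s = Ideal.Quotient.mk _ (C s) := rfl

lemma Bq_mul_struct (hk : 0 < k) (b : Bq p k) (hb : b ≠ 0) :
    ∃ (a : ℕ) (s : ZMod p), s ≠ 0 ∧
      b * xiB p k ^ a = algebraMap (ZMod p) (Bq p k) s * xiB p k ^ (k - 1) := by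
  obtain ⟨Q₀, rfl⟩ := Ideal.Quotient.mk_surjective b
  set Q := Q₀ %ₘ (X ^ k : Polynomial (ZMod p)) with hQ
  have hmonic : (X ^ k : Polynomial (ZMod p)).Monic := monic_X_pow k
  have hmk : (Ideal.Quotient.mk (Ideal.span {(X : Polynomial (ZMod p))^k})) Q₀
      = Ideal.Quotient.mk _ Q := by
    rw [Ideal.Quotient.eq, hQ]
    rw [Ideal.mem_span_singleton]
    exact ⟨Q₀ /ₘ X ^ k, by linear_combination (modByMonic_add_div Q₀ (X ^ k)).symm⟩
  have hQ0 : Q ≠ 0 := by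
    intro h
    apply hb
    rw [hmk, h, map_zero]
  have hdeg : Q.natDegree < k := by
    have := degree_modByMonic_lt Q₀ hmonic
    rw [degree_X_pow] at this
    exact natDegree_lt_iff_degree_lt hQ0 |>.mpr this
  set m := Q.natTrailingDegree with hm
  have hmlt : m < k := lt_of_le_of_lt Q.natTrailingDegree_le_natDegree hdeg
  set s := Q.coeff m with hs
  have hs0 : s ≠ 0 := by
    rw [hs, hm, ← Polynomial.trailingCoeff]
    exact mt Polynomial.trailingCoeff_eq_zero.mp hQ0
  refine ⟨k - 1 - m, s, hs0, ?_⟩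
  rw [hmk, algebraMap_Bq, xiB, ← map_pow, ← map_mul, ← map_pow, ← map_mul, Ideal.Quotient.eq,
    Ideal.mem_span_singleton]
  have hdvd : (X : Polynomial (ZMod p)) ^ (m + 1) ∣ (Q - C s * X ^ m) := by
    rw [X_pow_dvd_iff]
    intro d hd
    rcases lt_or_eq_of_le (Nat.lt_succ_iff.mp hd) with h | h
    · rw [coeff_sub, coeff_C_mul, coeff_X_pow, if_neg (Nat.ne_of_lt h),
        Polynomial.coeff_eq_zero_of_lt_natTrailingDegree (hm ▸ h), mul_zero, sub_zero]
    · subst h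
      rw [coeff_sub, coeff_C_mul, coeff_X_pow, if_pos rfl, mul_one, ← hs, sub_self]
  obtain ⟨W, hW⟩ := hdvd
  refine ⟨W, ?_⟩
  have harith : (k - 1 - m) + (m + 1) = k := by omega
  calc Q * X ^ (k - 1 - m) - C s * X ^ (k - 1)
      = (Q - C s * X ^ m) * X ^ (k - 1 - m) := by
        rw [sub_mul, mul_assoc, ← pow_add]
        congr 3
        omega
    _ = X ^ k * W := by
        rw [hW]
        have hxk : (X : Polynomial (ZMod p)) ^ k = X ^ (m + 1) * X ^ (k - 1 - m) := by
          rw [← pow_add]; congr 1; omega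
        rw [hxk]; ring

lemma phi_injective : Function.Injective (phi p k) :=
  Function.LeftInverse.injective (psi_phi p k)

lemma xiB_pow_ne (hk : 0 < k) : xiB p k ^ (k - 1) ≠ 0 := by
  rw [xiB, ← map_pow, Ne, Ideal.Quotient.eq_zero_iff_mem, Ideal.mem_span_singleton]
  intro h
  have := Polynomial.natDegree_le_of_dvd h (pow_ne_zero _ X_ne_zero)
  simp [natDegree_X_pow] at this
  omega

lemma wne (hk : 0 < k) : uu p k ^ (k - 1) * vv p k ≠ 0 := by
  intro h
  apply xiB_pow_ne p k hk
  have := congrArg (phi p k) h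
  rw [map_mul, map_pow, phi_uu, phi_vv, map_zero, TrivSqZeroExt.inl_pow] at this
  have h2 := congrArg TrivSqZeroExt.snd this
  simpa using h2

lemma Rbase_mul_struct (hk : 0 < k) (c : Rbase p k) (hc : c ≠ 0) :
    ∃ (a b : ℕ) (s : ZMod p), s ≠ 0 ∧
      c * uu p k ^ a * vv p k ^ b
        = algebraMap (ZMod p) (Rbase p k) s * (uu p k ^ (k - 1) * vv p k) := by
  have hphic : phi p k c ≠ 0 := fun h => hc (by
    have := congrArg (psi p k) h
    rwa [psi_phi, map_zero] at this)
  rcases eq_or_ne (phi p k c).fst 0 with hf | hf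
  · have hsnd : (phi p k c).snd ≠ 0 := fun h => hphic (TrivSqZeroExt.ext hf h)
    obtain ⟨a, s, hs, heq⟩ := Bq_mul_struct p k hk _ hsnd
    refine ⟨a, 0, s, hs, phi_injective p k ?_⟩
    rw [pow_zero, mul_one, map_mul, map_pow, phi_uu, map_mul, map_mul, map_pow, phi_uu, phi_vv,
      AlgHom.commutes]
    refine TrivSqZeroExt.ext ?_ ?_ <;>
      simp [TrivSqZeroExt.fst_mul, TrivSqZeroExt.snd_mul, TrivSqZeroExt.algebraMap_eq_inl',
        hf, heq, smul_eq_mul, MulOpposite.op_smul, DualNumber.fst_eps, DualNumber.snd_eps,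
        mul_comm]
  · obtain ⟨a, s, hs, heq⟩ := Bq_mul_struct p k hk _ hf
    refine ⟨a, 1, s, hs, phi_injective p k ?_⟩
    rw [pow_one, map_mul, map_mul, map_pow, phi_uu, phi_vv, map_mul, map_mul, map_pow, phi_uu,
      phi_vv, AlgHom.commutes]
    refine TrivSqZeroExt.ext ?_ ?_ <;>
      simp [TrivSqZeroExt.fst_mul, TrivSqZeroExt.snd_mul, TrivSqZeroExt.algebraMap_eq_inl',
        heq, smul_eq_mul, MulOpposite.op_smul, DualNumber.fst_eps, DualNumber.snd_eps,
        mul_comm]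


end Aux

section Main
variable (p k n : ℕ) [Fact p.Prime]

lemma theta_apply (f : Polynomial (ZMod p)) :
    theta p k n f = Ideal.Quotient.mk _ (f.map (algebraMap (ZMod p) (Rbase p k))) := rfl

lemma uR_pow_k : uR p k n ^ k = 0 := by
  rw [uR, ← map_pow, ← Polynomial.C_pow, uu_pow_k, Polynomial.C_0, map_zero]

lemma torTor_iff (C : Ideal (Rn p k n)) (f : Polynomial (ZMod p)) :
    f ∈ torTorSet p k n C k ↔ uR p k n ^ (k - 1) * vR p k n * theta p k n f ∈ C := by
  unfold torTorSet
  rw [uR_pow_k, zero_mul, Ideal.span_singleton_eq_bot.mpr rfl, sup_bot_eq]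
  rfl

lemma key_elem (f : Polynomial (ZMod p)) :
    uR p k n ^ (k - 1) * vR p k n * theta p k n f
      = Ideal.Quotient.mk _ (Polynomial.C (uu p k ^ (k-1) * vv p k)
          * f.map (algebraMap (ZMod p) (Rbase p k))) := by
  rw [theta_apply, uR, vR, ← map_pow, ← map_mul, ← map_mul]
  congr 1
  rw [map_mul, Polynomial.C_pow]

end Main


/-- a cyclic code `C` of length `p^l` over `F_p[u,v]/⟨u^k,v²,uv−vu⟩` whose
torsion code `C_{2k}` is generated by `(x−1)^{t}` with `0 < t ≤ p^{l−1}` has minimum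
Hamming distance `2`. -/
theorem stmt14 (p k l t : ℕ) [Fact p.Prime] (hk : 0 < k) (hl : 0 < l)
    (C : Ideal (Rn p k (p ^ l)))
    (hgen : IsMinGen p (p ^ l) (torTorSet p k (p ^ l) C k)
      ((Polynomial.X - 1 : Polynomial (ZMod p)) ^ t))
    (ht0 : 0 < t) (ht : t ≤ p ^ (l - 1)) :
    dHam p k (p ^ l) C = 2 := by
  have hp := (Fact.out : p.Prime)
  have hN0 : 0 < p ^ (l - 1) := Nat.pow_pos hp.pos
  have hNn : p ^ (l - 1) < p ^ l := Nat.pow_lt_pow_right hp.one_lt (by omega)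
  have hw0 : uu p k ^ (k - 1) * vv p k ≠ 0 := wne p k hk
  haveI : Nontrivial (Rbase p k) := nontrivial_of_ne _ _ hw0
  -- membership of the weight-2 codeword
  have hmemSet : ((X : Polynomial (ZMod p)) ^ p ^ (l - 1) - 1) ∈ torTorSet p k (p ^ l) C k := by
    rw [hgen.2.1]
    refine ⟨(X - 1) ^ (p ^ (l - 1) - t), 0, ?_⟩
    rw [mul_zero, add_zero, ← pow_add, Nat.add_sub_cancel' ht]
    rw [sub_pow_char_pow (p := p), one_pow]
  rw [torTor_iff, key_elem] at hmemSet
  set F : Polynomial (Rbase p k) :=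
    Polynomial.C (uu p k ^ (k - 1) * vv p k)
      * ((X : Polynomial (Rbase p k)) ^ p ^ (l - 1) - 1) with hF
  have hFmem : Ideal.Quotient.mk _ F ∈ C := by
    convert hmemSet using 2
    rw [hF]
    congr 1
    rw [Polynomial.map_sub, Polynomial.map_pow, Polynomial.map_X, Polynomial.map_one]
  have hFsupp : F.support = {p ^ (l - 1), 0} := by
    have h2 : F = Polynomial.C (uu p k ^ (k - 1) * vv p k) * X ^ p ^ (l - 1)
        + Polynomial.C (-(uu p k ^ (k - 1) * vv p k)) * X ^ 0 := by
      rw [hF, map_neg]; ring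
    rw [h2]
    exact Polynomial.support_binomial (by omega) hw0 (neg_ne_zero.mpr hw0)
  have hFne : F ≠ 0 := fun h => by
    rw [h, Polynomial.support_zero] at hFsupp
    exact absurd hFsupp.symm (by simp)
  have h2mem : 2 ∈ {m | ∃ f : Polynomial (Rbase p k), f ≠ 0 ∧ f.degree < ((p ^ l : ℕ) : _) ∧
      Ideal.Quotient.mk (Ideal.span {(Polynomial.X : Polynomial (Rbase p k)) ^ p ^ l - 1}) f ∈ C ∧
      m = f.support.card} := by
    refine ⟨F, hFne, ?_, hFmem, by rw [hFsupp]; exact (Finset.card_pair hN0.ne').symm⟩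
    calc F.degree ≤ (Polynomial.C (uu p k ^ (k - 1) * vv p k)).degree
          + ((X : Polynomial (Rbase p k)) ^ p ^ (l - 1) - 1).degree :=
          Polynomial.degree_mul_le _ _
      _ ≤ 0 + (p ^ (l - 1) : ℕ) := add_le_add Polynomial.degree_C_le (by
            simpa using (Polynomial.degree_X_pow_sub_C hN0 (1 : Rbase p k)).le)
      _ < ((p ^ l : ℕ) : _) := by
          rw [zero_add]
          exact_mod_cast Nat.cast_lt.mpr hNn
  -- lower bound
  have hlb : ∀ m ∈ {m | ∃ f : Polynomial (Rbase p k), f ≠ 0 ∧ f.degree < ((p ^ l : ℕ) : _) ∧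
      Ideal.Quotient.mk (Ideal.span {(Polynomial.X : Polynomial (Rbase p k)) ^ p ^ l - 1}) f ∈ C ∧
      m = f.support.card}, 2 ≤ m := by
    rintro m ⟨f, hfne, hdeg, hfC, rfl⟩
    by_contra hlt
    push_neg at hlt
    interval_cases h : f.support.card
    · exact hfne (Polynomial.support_eq_empty.mp (Finset.card_eq_zero.mp h))
    · obtain ⟨j, c, hc, rfl⟩ := Polynomial.card_support_eq_one.mp h
      obtain ⟨a, b, s, hs, hstruct⟩ := Rbase_mul_struct p k hk c hc
      have hmul : Ideal.Quotient.mk (Ideal.span {(X : Polynomial (Rbase p k)) ^ p ^ l - 1})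
          (Polynomial.C c * X ^ j) * uR p k (p ^ l) ^ a * vR p k (p ^ l) ^ b ∈ C :=
        by
          have hcomm : ∀ x y : Rn p k (p ^ l), x * y = y * x := by
            intro x y
            obtain ⟨x', rfl⟩ := Ideal.Quotient.mk_surjective x
            obtain ⟨y', rfl⟩ := Ideal.Quotient.mk_surjective y
            rw [← map_mul, ← map_mul]
            exact congrArg _ (mul_comm x' y')
          rw [hcomm]; exact Ideal.mul_mem_left _ _ (by rw [hcomm]; exact Ideal.mul_mem_left _ _ hfC)
      have hpoly : (Polynomial.C c * X ^ j * Polynomial.C (uu p k) ^ a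
            * Polynomial.C (vv p k) ^ b : Polynomial (Rbase p k))
          = Polynomial.C (uu p k ^ (k - 1) * vv p k)
            * (Polynomial.C (algebraMap (ZMod p) (Rbase p k) s) * X ^ j) := by
        have h3 : Polynomial.C c * Polynomial.C (uu p k) ^ a * Polynomial.C (vv p k) ^ b
            = Polynomial.C ((algebraMap (ZMod p) (Rbase p k)) s)
              * Polynomial.C (uu p k ^ (k - 1) * vv p k) := by
          rw [← Polynomial.C_pow, ← Polynomial.C_pow, ← map_mul, ← map_mul, hstruct, map_mul]
        linear_combination (X : Polynomial (Rbase p k)) ^ j * h3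
      have heq : Ideal.Quotient.mk (Ideal.span {(X : Polynomial (Rbase p k)) ^ p ^ l - 1})
          (Polynomial.C c * X ^ j) * uR p k (p ^ l) ^ a * vR p k (p ^ l) ^ b
          = uR p k (p ^ l) ^ (k - 1) * vR p k (p ^ l)
            * theta p k (p ^ l) (Polynomial.C s * X ^ j) := by
        rw [key_elem, uR, vR]
        simp only [← map_pow, ← map_mul]
        congr 1
        rw [Polynomial.map_mul, Polynomial.map_pow, Polynomial.map_X, Polynomial.map_C,
          ← hpoly, Polynomial.C_pow, Polynomial.C_pow]
      rw [heq] at hmul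
      have hmem2 : (Polynomial.C s * X ^ j) ∈ torTorSet p k (p ^ l) C k :=
        (torTor_iff p k (p ^ l) C _).mpr hmul
      rw [hgen.2.1] at hmem2
      obtain ⟨A, B, hAB⟩ := hmem2
      have hev := congrArg (Polynomial.eval (1 : ZMod p)) hAB
      simp only [Polynomial.eval_mul, Polynomial.eval_add, Polynomial.eval_pow,
        Polynomial.eval_sub, Polynomial.eval_X, Polynomial.eval_one, Polynomial.eval_C,
        sub_self, zero_pow ht0.ne', zero_mul, one_pow, zero_add, mul_zero, add_zero,
        one_mul, mul_one] at hev
      exact hs hev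
  rw [dHam]
  exact le_antisymm (Nat.sInf_le h2mem) (le_csInf ⟨2, h2mem⟩ hlb)
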